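/- Let d be an n×m real matrix each of whose columns sums to zero (i.e. 𝟙ᵀ d = 0, where 𝟙 is the all-ones vector in ℝⁿ), let M be an m×m real diagonal matrix, and let d̃ be the (n-1)×m matrix obtained from d by deleting one row. Then the symmetric matrices d M dᵀ and d̃ M d̃ᵀ have the same number of strictly positive eigenvalues and the same number of strictly negative eigenvalues (counted with multiplicity). -/

import Mathlib

open Matrix Finset

section Aux

variable {n : Type*} [Fintype n] [DecidableEq n]

/-- Extension-by-zero linear map from functions on a finset. -/
def extZero (S : Finset n) : (↥S → ℝ) →ₗ[ℝ] (n → ℝ) where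
  toFun c k := if h : k ∈ S then c ⟨k, h⟩ else 0
  map_add' c d := by funext k; by_cases h : k ∈ S <;> simp [h]
  map_smul' r c := by funext k; by_cases h : k ∈ S <;> simp [h]

lemma quad_eq_sum (A : Matrix n n ℝ) (hA : A.IsHermitian) (x : n → ℝ) :
    x ⬝ᵥ A *ᵥ x =
      ∑ k, hA.eigenvalues k *
        ((star (hA.eigenvectorUnitary : Matrix n n ℝ) *ᵥ x) k) ^ 2 := by
  set U := (hA.eigenvectorUnitary : Matrix n n ℝ) with hU
  have hst : star U = Uᵀ := conjTranspose_eq_transpose_of_trivial U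
  conv_lhs => rw [hA.spectral_theorem]
  rw [RCLike.ofReal_real_eq_id, Unitary.conjStarAlgAut_apply]
  rw [← mulVec_mulVec, ← mulVec_mulVec, dotProduct_mulVec, ← mulVec_transpose, ← hst]
  simp only [dotProduct, mulVec_diagonal, Function.comp_apply, id_eq]
  exact Finset.sum_congr rfl fun k _ => by ring

lemma star_mulVec_unitary (hA : (A : Matrix n n ℝ).IsHermitian) (v : n → ℝ) :
    star (hA.eigenvectorUnitary : Matrix n n ℝ) *ᵥ
      ((hA.eigenvectorUnitary : Matrix n n ℝ) *ᵥ v) = v := by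
  rw [mulVec_mulVec, mem_unitaryGroup_iff'.mp hA.eigenvectorUnitary.2, one_mulVec]

/-- Existence of a positive subspace of dimension = number of positive
eigenvalues. -/
lemma exists_pos_subspace (A : Matrix n n ℝ) (hA : A.IsHermitian) :
    ∃ V : Submodule ℝ (n → ℝ),
      Module.finrank ℝ V = (univ.filter fun k => 0 < hA.eigenvalues k).card ∧
      ∀ x ∈ V, x ≠ 0 → 0 < x ⬝ᵥ A *ᵥ x := by
  classical
  set U := (hA.eigenvectorUnitary : Matrix n n ℝ) with hU
  set S : Finset n := univ.filter fun k => 0 < hA.eigenvalues k with hS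
  set T : (↥S → ℝ) →ₗ[ℝ] (n → ℝ) := (mulVecLin U).comp (extZero S) with hT
  have hext : ∀ c : ↥S → ℝ, star U *ᵥ (T c) = extZero S c := fun c =>
    star_mulVec_unitary hA _
  have hinj : Function.Injective T := by
    intro c d hcd
    have h2 : extZero S c = extZero S d := by
      rw [← hext c, ← hext d, hcd]
    funext j
    have := congrFun h2 j.val
    simpa [extZero, j.prop] using this
  refine ⟨LinearMap.range T, ?_, ?_⟩
  · rw [LinearMap.finrank_range_of_inj hinj, Module.finrank_fintype_fun_eq_card,
      Fintype.card_coe]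
  · rintro x ⟨c, rfl⟩ hx0
    have hc : c ≠ 0 := fun h => hx0 (by rw [h, map_zero])
    rw [quad_eq_sum A hA, ← hU]
    have hy : ∀ k, (star U *ᵥ T c) k = extZero S c k := fun k =>
      congrFun (hext c) k
    simp only [hy]
    obtain ⟨j, hj⟩ : ∃ j, c j ≠ 0 := by
      by_contra h
      push_neg at h
      exact hc (funext h)
    apply Finset.sum_pos'
    · intro k _
      by_cases hk : k ∈ S
      · have hμ : 0 < hA.eigenvalues k := by
          simpa [hS] using hk
        have : extZero S c k = c ⟨k, hk⟩ := by simp [extZero, hk]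
        positivity
      · have : extZero S c k = 0 := by simp [extZero, hk]
        simp [this]
    · refine ⟨j.val, Finset.mem_univ _, ?_⟩
      have hμ : 0 < hA.eigenvalues j.val := by
        have hj2 := j.prop
        simp only [hS, Finset.mem_filter] at hj2
        exact hj2.2
      have : extZero S c j.val = c j := by simp [extZero, j.prop]
      rw [this]
      positivity

/-- Existence of a negative subspace of dimension = number of negative
eigenvalues. -/
lemma exists_neg_subspace (A : Matrix n n ℝ) (hA : A.IsHermitian) :
    ∃ V : Submodule ℝ (n → ℝ),
      Module.finrank ℝ V = (univ.filter fun k => hA.eigenvalues k < 0).card ∧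
      ∀ x ∈ V, x ≠ 0 → x ⬝ᵥ A *ᵥ x < 0 := by
  classical
  set U := (hA.eigenvectorUnitary : Matrix n n ℝ) with hU
  set S : Finset n := univ.filter fun k => hA.eigenvalues k < 0 with hS
  set T : (↥S → ℝ) →ₗ[ℝ] (n → ℝ) := (mulVecLin U).comp (extZero S) with hT
  have hext : ∀ c : ↥S → ℝ, star U *ᵥ (T c) = extZero S c := fun c =>
    star_mulVec_unitary hA _
  have hinj : Function.Injective T := by
    intro c d hcd
    have h2 : extZero S c = extZero S d := by
      rw [← hext c, ← hext d, hcd]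
    funext j
    have := congrFun h2 j.val
    simpa [extZero, j.prop] using this
  refine ⟨LinearMap.range T, ?_, ?_⟩
  · rw [LinearMap.finrank_range_of_inj hinj, Module.finrank_fintype_fun_eq_card,
      Fintype.card_coe]
  · rintro x ⟨c, rfl⟩ hx0
    have hc : c ≠ 0 := fun h => hx0 (by rw [h, map_zero])
    rw [quad_eq_sum A hA, ← hU]
    have hy : ∀ k, (star U *ᵥ T c) k = extZero S c k := fun k =>
      congrFun (hext c) k
    simp only [hy]
    obtain ⟨j, hj⟩ : ∃ j, c j ≠ 0 := by
      by_contra h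
      push_neg at h
      exact hc (funext h)
    have hpos : 0 < ∑ k, -(hA.eigenvalues k * (extZero S c k) ^ 2) := by
      apply Finset.sum_pos'
      · intro k _
        by_cases hk : k ∈ S
        · have hμ : hA.eigenvalues k < 0 := by
            simpa [hS] using hk
          have hsq : (0:ℝ) ≤ extZero S c k ^ 2 := sq_nonneg _
          exact neg_nonneg.mpr (mul_nonpos_of_nonpos_of_nonneg hμ.le hsq)
        · have : extZero S c k = 0 := by simp [extZero, hk]
          simp [this]
      · refine ⟨j.val, Finset.mem_univ _, ?_⟩
        have hμ : hA.eigenvalues j.val < 0 := by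
          have hj2 := j.prop
          simp only [hS, Finset.mem_filter] at hj2
          exact hj2.2
        have hc2 : extZero S c j.val = c j := by simp [extZero, j.prop]
        rw [hc2]
        have hsq : (0:ℝ) < c j ^ 2 := by positivity
        exact neg_pos.mpr (mul_neg_of_neg_of_pos hμ hsq)
    rw [Finset.sum_neg_distrib] at hpos
    linarith

/-- One-sided comparison of positive eigenvalue counts under a quadratic-form
pullback. -/
lemma posCard_le {p q : Type*} [Fintype p] [DecidableEq p] [Fintype q]
    [DecidableEq q] (A : Matrix p p ℝ) (B : Matrix q q ℝ)
    (hA : A.IsHermitian) (hB : B.IsHermitian) (F : Matrix q p ℝ)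
    (hq : ∀ x, x ⬝ᵥ A *ᵥ x = (F *ᵥ x) ⬝ᵥ B *ᵥ (F *ᵥ x)) :
    (univ.filter fun k => 0 < hA.eigenvalues k).card ≤
      (univ.filter fun k => 0 < hB.eigenvalues k).card := by
  classical
  obtain ⟨V, hVrank, hVpos⟩ := exists_pos_subspace A hA
  set UB := (hB.eigenvectorUnitary : Matrix q q ℝ) with hUB
  set S : Finset q := univ.filter fun k => 0 < hB.eigenvalues k with hS
  set f : (p → ℝ) →ₗ[ℝ] (↥S → ℝ) :=
    (LinearMap.funLeft ℝ ℝ Subtype.val).comp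
      ((mulVecLin (star UB)).comp (mulVecLin F)) with hf
  have hinj : Function.Injective (f.comp V.subtype) := by
    rw [injective_iff_map_eq_zero]
    rintro ⟨x, hxV⟩ hx
    have hcoords : ∀ k : q, k ∈ S → (star UB *ᵥ (F *ᵥ x)) k = 0 := by
      intro k hk
      have h0 := congrFun hx ⟨k, hk⟩
      simpa [hf] using h0
    have hquad : x ⬝ᵥ A *ᵥ x ≤ 0 := by
      rw [hq x, quad_eq_sum B hB, ← hUB]
      apply Finset.sum_nonpos
      intro k _
      by_cases hk : k ∈ S
      · rw [hcoords k hk]; simp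
      · have hμ : hB.eigenvalues k ≤ 0 := by
          by_contra h
          exact hk (by simp [hS, lt_of_not_ge h])
        exact mul_nonpos_of_nonpos_of_nonneg hμ (sq_nonneg _)
    have hx0 : x = 0 := by
      by_contra hx0
      exact absurd (hVpos x hxV hx0) (not_lt.mpr hquad)
    exact Subtype.ext hx0
  calc (univ.filter fun k => 0 < hA.eigenvalues k).card
      = Module.finrank ℝ V := hVrank.symm
    _ ≤ Module.finrank ℝ (↥S → ℝ) :=
        LinearMap.finrank_le_finrank_of_injective hinj
    _ = S.card := by
        rw [Module.finrank_fintype_fun_eq_card, Fintype.card_coe]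

/-- One-sided comparison of negative eigenvalue counts under a quadratic-form
pullback. -/
lemma negCard_le {p q : Type*} [Fintype p] [DecidableEq p] [Fintype q]
    [DecidableEq q] (A : Matrix p p ℝ) (B : Matrix q q ℝ)
    (hA : A.IsHermitian) (hB : B.IsHermitian) (F : Matrix q p ℝ)
    (hq : ∀ x, x ⬝ᵥ A *ᵥ x = (F *ᵥ x) ⬝ᵥ B *ᵥ (F *ᵥ x)) :
    (univ.filter fun k => hA.eigenvalues k < 0).card ≤
      (univ.filter fun k => hB.eigenvalues k < 0).card := by
  classical
  obtain ⟨V, hVrank, hVneg⟩ := exists_neg_subspace A hA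
  set UB := (hB.eigenvectorUnitary : Matrix q q ℝ) with hUB
  set S : Finset q := univ.filter fun k => hB.eigenvalues k < 0 with hS
  set f : (p → ℝ) →ₗ[ℝ] (↥S → ℝ) :=
    (LinearMap.funLeft ℝ ℝ Subtype.val).comp
      ((mulVecLin (star UB)).comp (mulVecLin F)) with hf
  have hinj : Function.Injective (f.comp V.subtype) := by
    rw [injective_iff_map_eq_zero]
    rintro ⟨x, hxV⟩ hx
    have hcoords : ∀ k : q, k ∈ S → (star UB *ᵥ (F *ᵥ x)) k = 0 := by
      intro k hk
      have h0 := congrFun hx ⟨k, hk⟩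
      simpa [hf] using h0
    have hquad : 0 ≤ x ⬝ᵥ A *ᵥ x := by
      rw [hq x, quad_eq_sum B hB, ← hUB]
      apply Finset.sum_nonneg
      intro k _
      by_cases hk : k ∈ S
      · rw [hcoords k hk]; simp
      · have hμ : 0 ≤ hB.eigenvalues k := by
          by_contra h
          exact hk (by simp [hS, lt_of_not_ge h])
        positivity
    have hx0 : x = 0 := by
      by_contra hx0
      exact absurd (hVneg x hxV hx0) (not_lt.mpr hquad)
    exact Subtype.ext hx0
  calc (univ.filter fun k => hA.eigenvalues k < 0).card
      = Module.finrank ℝ V := hVrank.symm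
    _ ≤ Module.finrank ℝ (↥S → ℝ) :=
        LinearMap.finrank_le_finrank_of_injective hinj
    _ = S.card := by
        rw [Module.finrank_fintype_fun_eq_card, Fintype.card_coe]

end Aux

/-- If the columns of d each sum to zero and M = diagonal c, then
deleting one row of d does not change the number of strictly positive (resp.
strictly negative) eigenvalues of the symmetric matrix d M dᵀ. -/
theorem delete_row_preserves_signs (N m : ℕ)
    (d : Matrix (Fin (N + 1)) (Fin m) ℝ)
    (hcol : ∀ e : Fin m, ∑ i, d i e = 0)
    (c : Fin m → ℝ)
    (i₀ : Fin (N + 1))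
    (dt : Matrix (Fin N) (Fin m) ℝ)
    (hdt : dt = d.submatrix i₀.succAbove id)
    (hH : (d * Matrix.diagonal c * dᵀ).IsHermitian)
    (hHt : (dt * Matrix.diagonal c * dtᵀ).IsHermitian) :
    (univ.filter fun k => 0 < hH.eigenvalues k).card =
      (univ.filter fun k => 0 < hHt.eigenvalues k).card ∧
    (univ.filter fun k => hH.eigenvalues k < 0).card =
      (univ.filter fun k => hHt.eigenvalues k < 0).card := by
  classical
  set L := d * Matrix.diagonal c * dᵀ with hL
  set Lt := dt * Matrix.diagonal c * dtᵀ with hLt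
  set E : Matrix (Fin (N + 1)) (Fin N) ℝ :=
    fun i j => if i₀.succAbove j = i then 1 else if i = i₀ then -1 else 0
    with hE
  set G : Matrix (Fin (N + 1)) (Fin N) ℝ :=
    fun i j => if i₀.succAbove j = i then 1 else 0 with hG
  have hdE : d = E * dt := by
    ext i e
    rw [mul_apply]
    by_cases hi : i = i₀
    · have hterm : ∀ j : Fin N, E i j * dt j e = -(d (i₀.succAbove j) e) := by
        intro j
        have h1 : i₀.succAbove j ≠ i₀ := Fin.succAbove_ne i₀ j
        have h2 : ¬ (i₀.succAbove j = i) := by rw [hi]; exact h1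
        simp only [hE]
        rw [if_neg h2, if_pos hi, hdt]
        simp [Matrix.submatrix_apply]
      rw [Finset.sum_congr rfl fun j _ => hterm j, Finset.sum_neg_distrib]
      have hsum := Fin.sum_univ_succAbove (fun i => d i e) i₀
      rw [hcol e] at hsum
      rw [hi]
      linarith
    · obtain ⟨j₀, hj₀⟩ := Fin.exists_succAbove_eq hi
      have hcond : ∀ j : Fin N, (i₀.succAbove j = i) ↔ (j = j₀) := by
        intro j
        rw [← hj₀]
        exact ⟨fun hh => Fin.succAbove_right_injective hh, fun hh => by rw [hh]⟩
      have : ∀ j : Fin N, E i j * dt j e = if j = j₀ then dt j e else 0 := by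
        intro j
        by_cases hj : j = j₀
        · subst hj
          simp [hE, hj₀]
        · have : ¬ (i₀.succAbove j = i) := fun hh => hj ((hcond j).mp hh)
          simp [hE, this, hi, hj]
      rw [Finset.sum_congr rfl fun j _ => this j, Finset.sum_ite_eq' univ j₀]
      simp [hdt, hj₀]
  have hLE : L = E * Lt * Eᵀ := by
    rw [hL, hLt, hdE, transpose_mul]
    simp only [Matrix.mul_assoc]
  have hEG : Eᵀ * G = 1 := by
    ext j j'
    rw [mul_apply]
    have : ∀ i : Fin (N + 1), Eᵀ j i * G i j' =
        if i = i₀.succAbove j' then E i j else 0 := by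
      intro i
      by_cases hi : i = i₀.succAbove j'
      · simp [hG, transpose_apply, hi]
      · have h3 : ¬ (i₀.succAbove j' = i) := fun hh => hi hh.symm
        simp only [hG, transpose_apply]
        rw [if_neg h3, if_neg hi, mul_zero]
    rw [Finset.sum_congr rfl fun i _ => this i, Finset.sum_ite_eq' univ]
    simp only [Finset.mem_univ, if_true]
    by_cases hjj : j = j'
    · subst hjj
      rw [Matrix.one_apply_eq]
      simp [hE]
    · have h1 : ¬ (i₀.succAbove j = i₀.succAbove j') := fun hh =>
        hjj (Fin.succAbove_right_injective hh)
      have h2 : i₀.succAbove j' ≠ i₀ := Fin.succAbove_ne i₀ j'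
      rw [Matrix.one_apply_ne (fun hh => hjj hh)]
      simp [hE, h1, h2]
  have hq1 : ∀ x, x ⬝ᵥ L *ᵥ x = (Eᵀ *ᵥ x) ⬝ᵥ Lt *ᵥ (Eᵀ *ᵥ x) := by
    intro x
    rw [hLE, ← mulVec_mulVec, ← mulVec_mulVec, dotProduct_mulVec,
      ← mulVec_transpose]
  have hq2 : ∀ v, v ⬝ᵥ Lt *ᵥ v = (G *ᵥ v) ⬝ᵥ L *ᵥ (G *ᵥ v) := by
    intro v
    rw [hq1 (G *ᵥ v), mulVec_mulVec, hEG, one_mulVec]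
  constructor
  · exact le_antisymm (posCard_le L Lt hH hHt Eᵀ hq1)
      (posCard_le Lt L hHt hH G hq2)
  · exact le_antisymm (negCard_le L Lt hH hHt Eᵀ hq1)
      (negCard_le Lt L hHt hH G hq2)
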